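/- Let (X, ↪, P) be a primal-proximity space and A, B ⊆ X. Then: (1) if Bᶜ ∉ P, then (A ∪ B)^↪ = A^↪ = (A \ B)^↪; (2) if ((A \ B) ∪ (B \ A))ᶜ ∉ P, then A^↪ = B^↪; where A^↪ := {x ∈ X : {x} ↪ A}. -/
import Mathlib


open Set

/-- A collection `P` of subsets of `X` is a *primal* on `X`. -/
def IsPrimalOn {X : Type*} (P : Set (Set X)) : Prop :=
  (Set.univ : Set X) ∉ P ∧
  (∀ A B : Set X, A ∈ P → B ⊆ A → B ∈ P) ∧
  (∀ A B : Set X, A ∩ B ∈ P → A ∈ P ∨ B ∈ P)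

/-- A binary relation `r` on the power set of `X` is a *primal-proximity* with
respect to a primal `P` on `X`. -/
def IsPrimalProximity {X : Type*} (P : Set (Set X)) (r : Set X → Set X → Prop) : Prop :=
  (∀ A B : Set X, r A B → r B A) ∧
  (∀ A B C : Set X, r A (B ∪ C) ↔ (r A B ∨ r A C)) ∧
  (∀ A : Set X, Aᶜ ∉ P → ∀ B : Set X, ¬ r A B) ∧
  (∀ A B : Set X, (A ∩ B)ᶜ ∈ P → r A B) ∧
  (∀ A B : Set X, ¬ r A B →
    ∃ C D : Set X, ¬ r A Cᶜ ∧ ¬ r Dᶜ B ∧ (C ∩ D)ᶜ ∉ P)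

/-- The point-primal proximity of `A`: `A^↪ = {x | {x} ↪ A}`. -/
def ppp {X : Type*} (r : Set X → Set X → Prop) (A : Set X) : Set X :=
  {x : X | r {x} A}

theorem stmt_9 {X : Type*} [Nonempty X] (P : Set (Set X)) (r : Set X → Set X → Prop)
    (hP : IsPrimalOn P) (hr : IsPrimalProximity P r) (A B : Set X) :
    (Bᶜ ∉ P → ppp r (A ∪ B) = ppp r A ∧ ppp r A = ppp r (A \ B)) ∧
    (((A \ B) ∪ (B \ A))ᶜ ∉ P → ppp r A = ppp r B) := by
  obtain ⟨hsym, hunion, hnot, _, _⟩ := hr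
  obtain ⟨_, hdown, _⟩ := hP
  -- if Cᶜ ∉ P then ¬ r x C
  have key : ∀ C : Set X, Cᶜ ∉ P → ∀ x : X, ¬ r {x} C := by
    intro C hC x hx
    exact hnot C hC {x} (hsym _ _ hx)
  -- if Cᶜ ∉ P and D ⊆ C then Dᶜ ∉ P
  have key2 : ∀ C D : Set X, Cᶜ ∉ P → D ⊆ C → Dᶜ ∉ P := by
    intro C D hC hsub hD
    exact hC (hdown Dᶜ Cᶜ hD (compl_subset_compl.mpr hsub))
  constructor
  · intro hB
    constructor
    · ext x
      simp only [ppp, mem_setOf_eq, hunion]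
      exact ⟨fun h => h.resolve_right (key B hB x), Or.inl⟩
    · ext x
      have hAB : (A ∩ B)ᶜ ∉ P := key2 B (A ∩ B) hB inter_subset_right
      have : A = (A \ B) ∪ (A ∩ B) := by
        ext y; by_cases hy : y ∈ B <;> simp [hy]
      rw [ppp, ppp]
      simp only [mem_setOf_eq]
      constructor
      · intro h
        rw [this] at h
        exact (hunion _ _ _).mp h |>.resolve_right (key _ hAB x)
      · intro h
        rw [this]
        exact (hunion _ _ _).mpr (Or.inl h)
  · intro hS
    have h1 : (A \ B)ᶜ ∉ P := key2 _ _ hS subset_union_left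
    have h2 : (B \ A)ᶜ ∉ P := key2 _ _ hS subset_union_right
    have eqA : A = (A ∩ B) ∪ (A \ B) := by
      ext y; by_cases hy : y ∈ B <;> simp [hy]
    have eqB : B = (A ∩ B) ∪ (B \ A) := by
      ext y; by_cases hy : y ∈ A <;> simp [hy]
    ext x
    simp only [ppp, mem_setOf_eq]
    constructor
    · intro h
      rw [eqA] at h
      have := (hunion _ _ _).mp h |>.resolve_right (key _ h1 x)
      rw [eqB]
      exact (hunion _ _ _).mpr (Or.inl this)
    · intro h
      rw [eqB] at h
      have := (hunion _ _ _).mp h |>.resolve_right (key _ h2 x)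
      rw [eqA]
      exact (hunion _ _ _).mpr (Or.inl this)
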